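/- arXiv:1705.00864 — 3 statements merged into one kernel-verified Lean document; each statement's English description precedes it below -/
import Mathlib

section
/- For every t > 0 and r > 0, the Gruet kernels satisfy Milson's recursion linking dimensions 2 and 4: p_4(t,r) = -(e^{-t} / (2π sinh(r))) · ∂p_2/∂r (t,r); in particular the function r ↦ p_2(t,r) is differentiable on (0,∞) and its derivative equals -2π e^{t} sinh(r) p_4(t,r). -/
open Real MeasureTheory

/-- The Gruet kernel `p_n(t,r)` for the heat semigroup on hyperbolic space `ℍ^n`. -/
noncomputable def gruet (n : ℕ) (t r : ℝ) : ℝ :=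
  Real.exp (-((n : ℝ) - 1) ^ 2 * t / 8) / (π * (2 * π) ^ ((n : ℝ) / 2) * Real.sqrt t) *
    Real.Gamma (((n : ℝ) + 1) / 2) *
    ∫ b in Set.Ioi (0 : ℝ),
      Real.exp ((π ^ 2 - b ^ 2) / (2 * t)) * Real.sinh b * Real.sin (π * b / t) /
        (Real.cosh b + Real.cosh r) ^ (((n : ℝ) + 1) / 2)

namespace MilsonAux

noncomputable def f (t b : ℝ) : ℝ :=
  Real.exp ((π ^ 2 - b ^ 2) / (2 * t)) * Real.sinh b * Real.sin (π * b / t)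

lemma cosh_add_pos (b ρ : ℝ) : 0 < Real.cosh b + Real.cosh ρ := by
  have := Real.cosh_pos (x := b); have := Real.cosh_pos (x := ρ); linarith

lemma cosh_add_one_le (b ρ : ℝ) : 1 ≤ Real.cosh b + Real.cosh ρ := by
  have := Real.one_le_cosh b; have := Real.cosh_pos (x := ρ); linarith

lemma sinh_le_cosh (x : ℝ) : Real.sinh x ≤ Real.cosh x := by
  rw [Real.sinh_eq, Real.cosh_eq]
  have := Real.exp_pos (-x)
  linarith

lemma div_cosh (A b ρ p : ℝ) :
    A / (Real.cosh b + Real.cosh ρ) ^ p = A * (Real.cosh b + Real.cosh ρ) ^ (-p) := by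
  rw [Real.rpow_neg (cosh_add_pos b ρ).le, div_eq_mul_inv]

lemma gruet_eq (n : ℕ) (t ρ : ℝ) :
    gruet n t ρ
      = Real.exp (-((n : ℝ) - 1) ^ 2 * t / 8) / (π * (2 * π) ^ ((n : ℝ) / 2) * Real.sqrt t) *
          Real.Gamma (((n : ℝ) + 1) / 2) *
        ∫ b in Set.Ioi (0 : ℝ),
          f t b * (Real.cosh b + Real.cosh ρ) ^ (-(((n : ℝ) + 1) / 2)) := by
  simp_rw [gruet, f, div_cosh]

lemma abs_f_le (t b : ℝ) (hb : 0 < b) :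
    |f t b| ≤ Real.exp ((π ^ 2 - b ^ 2) / (2 * t)) * Real.sinh b := by
  have hs : 0 ≤ Real.sinh b := Real.sinh_nonneg_iff.mpr hb.le
  have he : 0 < Real.exp ((π ^ 2 - b ^ 2) / (2 * t)) := Real.exp_pos _
  rw [f, abs_mul, abs_mul, abs_of_pos he, abs_of_nonneg hs]
  have h1 : |Real.sin (π * b / t)| ≤ 1 := Real.abs_sin_le_one _
  calc Real.exp ((π ^ 2 - b ^ 2) / (2 * t)) * Real.sinh b * |Real.sin (π * b / t)|
      ≤ Real.exp ((π ^ 2 - b ^ 2) / (2 * t)) * Real.sinh b * 1 :=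
        mul_le_mul_of_nonneg_left h1 (by positivity)
  _ = _ := mul_one _

lemma aux_bound (t p ρ b : ℝ) (hp : 1 ≤ p) (hb : 0 < b) :
    |f t b * (Real.cosh b + Real.cosh ρ) ^ (-p)|
      ≤ Real.exp ((π ^ 2 - b ^ 2) / (2 * t)) := by
  set u := Real.cosh b + Real.cosh ρ with hu
  have hu1 : 1 ≤ u := cosh_add_one_le b ρ
  have hu0 : 0 < u := cosh_add_pos b ρ
  have hup : 0 < u ^ p := Real.rpow_pos_of_pos hu0 p
  have hsc : Real.sinh b ≤ u ^ p := by
    calc Real.sinh b ≤ Real.cosh b := sinh_le_cosh b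
    _ ≤ u := by have := Real.cosh_pos (x := ρ); simp [hu]; linarith
    _ = u ^ (1 : ℝ) := (Real.rpow_one u).symm
    _ ≤ u ^ p := Real.rpow_le_rpow_of_exponent_le hu1 hp
  rw [abs_mul, abs_of_pos (Real.rpow_pos_of_pos hu0 _)]
  have h1 := abs_f_le t b hb
  have h2 : u ^ (-p) = (u ^ p)⁻¹ := by rw [Real.rpow_neg hu0.le]
  rw [h2]
  have he : 0 < Real.exp ((π ^ 2 - b ^ 2) / (2 * t)) := Real.exp_pos _
  have hsinh : 0 ≤ Real.sinh b := Real.sinh_nonneg_iff.mpr hb.le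
  calc |f t b| * (u ^ p)⁻¹ ≤ (Real.exp ((π ^ 2 - b ^ 2) / (2 * t)) * Real.sinh b) * (u ^ p)⁻¹ := by
        apply mul_le_mul_of_nonneg_right h1 (by positivity)
  _ ≤ Real.exp ((π ^ 2 - b ^ 2) / (2 * t)) * 1 := by
        rw [mul_assoc]
        apply mul_le_mul_of_nonneg_left _ he.le
        rw [← div_eq_mul_inv, div_le_one hup]
        exact hsc
  _ = _ := mul_one _

lemma contF (t ρ p : ℝ) :
    Continuous (fun b => f t b * (Real.cosh b + Real.cosh ρ) ^ p) := by
  apply Continuous.mul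
  · unfold f; fun_prop
  · exact (Real.continuous_cosh.add continuous_const).rpow_const
      (fun b => Or.inl (cosh_add_pos b ρ).ne')

lemma int_gauss (t : ℝ) (ht : 0 < t) :
    IntegrableOn (fun b => Real.exp ((π ^ 2 - b ^ 2) / (2 * t))) (Set.Ioi (0 : ℝ)) := by
  have h : (fun b : ℝ => Real.exp ((π ^ 2 - b ^ 2) / (2 * t)))
      = fun b => Real.exp (π ^ 2 / (2 * t)) * Real.exp (-(1 / (2 * t)) * b ^ 2) := by
    funext b; rw [← Real.exp_add]; congr 1; field_simp; ring
  rw [h]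
  exact ((integrable_exp_neg_mul_sq (by positivity)).const_mul _).integrableOn

lemma intF (t ρ p : ℝ) (ht : 0 < t) (hp : 1 ≤ p) :
    IntegrableOn (fun b => f t b * (Real.cosh b + Real.cosh ρ) ^ (-p)) (Set.Ioi (0 : ℝ)) := by
  apply Integrable.mono (int_gauss t ht) ((contF t ρ (-p)).aestronglyMeasurable.restrict)
  filter_upwards [ae_restrict_mem measurableSet_Ioi] with b hb
  rw [Real.norm_eq_abs, Real.norm_eq_abs, abs_of_pos (Real.exp_pos _)]
  exact aux_bound t p ρ b hp hb

lemma hasDeriv_int (t r : ℝ) (ht : 0 < t) :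
    HasDerivAt
      (fun ρ => ∫ b in Set.Ioi (0 : ℝ), f t b * (Real.cosh b + Real.cosh ρ) ^ (-(3 / 2 : ℝ)))
      (∫ b in Set.Ioi (0 : ℝ),
        Real.sinh r * (-(3 / 2))
          * (f t b * (Real.cosh b + Real.cosh r) ^ (-(5 / 2 : ℝ)))) r := by
  set F : ℝ → ℝ → ℝ := fun ρ b => f t b * (Real.cosh b + Real.cosh ρ) ^ (-(3 / 2 : ℝ)) with hF
  set F' : ℝ → ℝ → ℝ := fun ρ b =>
    Real.sinh ρ * (-(3 / 2)) * (f t b * (Real.cosh b + Real.cosh ρ) ^ (-(5 / 2 : ℝ))) with hF'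
  have key := hasDerivAt_integral_of_dominated_loc_of_deriv_le (F := F) (F' := F')
    (x₀ := r) (μ := volume.restrict (Set.Ioi (0 : ℝ)))
    (bound := fun b => 3 / 2 * Real.sinh (|r| + 1) * Real.exp ((π ^ 2 - b ^ 2) / (2 * t)))
    (s := Metric.ball r 1) (Metric.ball_mem_nhds r one_pos)
    (Filter.Eventually.of_forall fun ρ => (contF t ρ _).aestronglyMeasurable.restrict)
    (intF t r (3 / 2) ht (by norm_num))
    ((continuous_const.mul (contF t r (-(5 / 2 : ℝ)))).aestronglyMeasurable.restrict)
    ?_ ?_ ?_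
  · exact key.2
  · -- bound
    filter_upwards [ae_restrict_mem measurableSet_Ioi] with b hb ρ hρ
    have hsb : |Real.sinh ρ| ≤ Real.sinh (|r| + 1) := by
      rw [Real.abs_sinh]
      apply Real.sinh_le_sinh.mpr
      have h3 : |ρ - r| < 1 := by simpa [Real.dist_eq] using hρ
      have h4 := abs_sub_abs_le_abs_sub ρ r
      linarith
    have hb2 := aux_bound t (5 / 2) ρ b (by norm_num) hb
    have : ‖F' ρ b‖ = |Real.sinh ρ| * (3 / 2)
        * |f t b * (Real.cosh b + Real.cosh ρ) ^ (-(5 / 2 : ℝ))| := by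
      simp only [hF', Real.norm_eq_abs, abs_mul]
      rw [abs_neg, abs_of_nonneg (by norm_num : (0:ℝ) ≤ 3/2)]
    rw [this]
    have h0 : 0 ≤ Real.sinh (|r| + 1) := Real.sinh_nonneg_iff.mpr (by positivity)
    calc |Real.sinh ρ| * (3 / 2) * |f t b * (Real.cosh b + Real.cosh ρ) ^ (-(5 / 2 : ℝ))|
        ≤ Real.sinh (|r| + 1) * (3 / 2) * Real.exp ((π ^ 2 - b ^ 2) / (2 * t)) := by
          apply mul_le_mul (by nlinarith [abs_nonneg (Real.sinh ρ)]) hb2 (abs_nonneg _)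
          positivity
    _ = 3 / 2 * Real.sinh (|r| + 1) * Real.exp ((π ^ 2 - b ^ 2) / (2 * t)) := by ring
  · exact (int_gauss t ht).const_mul _
  · -- differentiability
    filter_upwards with b ρ hρ
    have h0 : HasDerivAt (fun ρ => Real.cosh b + Real.cosh ρ) (Real.sinh ρ) ρ :=
      (Real.hasDerivAt_cosh ρ).const_add _
    have h1 := (h0.rpow_const (p := -(3 / 2 : ℝ)) (Or.inl (cosh_add_pos b ρ).ne')).const_mul (f t b)
    convert h1 using 1
    · rfl
    have : (-(3 / 2 : ℝ)) - 1 = -(5 / 2 : ℝ) := by norm_num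
    rw [hF']
    rw [this] at h1 ⊢
    ring

lemma gruet_two (t ρ : ℝ) :
    gruet 2 t ρ
      = Real.exp (-(t / 8)) / (π * (2 * π) * Real.sqrt t) * Real.Gamma (3 / 2) *
        ∫ b in Set.Ioi (0 : ℝ), f t b * (Real.cosh b + Real.cosh ρ) ^ (-(3 / 2 : ℝ)) := by
  have e1 : -(((2 : ℕ) : ℝ) - 1) ^ 2 * t / 8 = -(t / 8) := by push_cast; ring
  have e2 : (((2 : ℕ) : ℝ)) / 2 = (1 : ℝ) := by push_cast; norm_num
  have e3 : (((2 : ℕ) : ℝ) + 1) / 2 = (3 / 2 : ℝ) := by push_cast; norm_num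
  rw [gruet_eq, e1, e2, e3, Real.rpow_one]

lemma gruet_four (t ρ : ℝ) :
    gruet 4 t ρ
      = Real.exp (-(9 * t / 8)) / (π * (2 * π) ^ 2 * Real.sqrt t) *
          (3 / 2 * Real.Gamma (3 / 2)) *
        ∫ b in Set.Ioi (0 : ℝ), f t b * (Real.cosh b + Real.cosh ρ) ^ (-(5 / 2 : ℝ)) := by
  have e1 : -(((4 : ℕ) : ℝ) - 1) ^ 2 * t / 8 = -(9 * t / 8) := by push_cast; ring
  have e2 : (((4 : ℕ) : ℝ)) / 2 = (((2 : ℕ) : ℝ)) := by push_cast; norm_num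
  have e3 : (((4 : ℕ) : ℝ) + 1) / 2 = (3 / 2 : ℝ) + 1 := by push_cast; norm_num
  have e4 : (3 / 2 : ℝ) + 1 = 5 / 2 := by norm_num
  rw [gruet_eq, e1, e2, e3, Real.rpow_natCast,
    Real.Gamma_add_one (by norm_num : (3 / 2 : ℝ) ≠ 0), e4]

end MilsonAux

/-- Milson's recursion between dimensions 2 and 4 for the Gruet kernels. -/
theorem milson_two_four (t r : ℝ) (ht : 0 < t) (hr : 0 < r) :
    HasDerivAt (fun ρ => gruet 2 t ρ)
      (-(2 * π) * Real.exp t * Real.sinh r * gruet 4 t r) r ∧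
    gruet 4 t r
      = -(Real.exp (-t) / (2 * π * Real.sinh r)) * deriv (fun ρ => gruet 2 t ρ) r := by
  have hπ : π ≠ 0 := Real.pi_ne_zero
  have hst : Real.sqrt t ≠ 0 := (Real.sqrt_pos.mpr ht).ne'
  have hsr : Real.sinh r ≠ 0 := (Real.sinh_pos_iff.mpr hr).ne'
  set C2 : ℝ := Real.exp (-(t / 8)) / (π * (2 * π) * Real.sqrt t) * Real.Gamma (3 / 2) with hC2
  set I5 : ℝ := ∫ b in Set.Ioi (0 : ℝ),
      MilsonAux.f t b * (Real.cosh b + Real.cosh r) ^ (-(5 / 2 : ℝ)) with hI5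
  have hfun : (fun ρ => gruet 2 t ρ)
      = fun ρ => C2 * ∫ b in Set.Ioi (0 : ℝ),
          MilsonAux.f t b * (Real.cosh b + Real.cosh ρ) ^ (-(3 / 2 : ℝ)) :=
    funext fun ρ => MilsonAux.gruet_two t ρ
  have hI := (MilsonAux.hasDeriv_int t r ht).const_mul C2
  have hintc : (∫ b in Set.Ioi (0 : ℝ), Real.sinh r * (-(3 / 2))
      * (MilsonAux.f t b * (Real.cosh b + Real.cosh r) ^ (-(5 / 2 : ℝ))))
      = Real.sinh r * (-(3 / 2)) * I5 := by
    rw [hI5, MeasureTheory.integral_const_mul]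
  have hexp : Real.exp (-(9 * t / 8)) = Real.exp (-(t / 8)) / Real.exp t := by
    rw [eq_div_iff (Real.exp_ne_zero t), ← Real.exp_add]; ring_nf
  have hc : C2 * (Real.sinh r * (-(3 / 2)))
      = -(2 * π) * Real.exp t * Real.sinh r
          * (Real.exp (-(9 * t / 8)) / (π * (2 * π) ^ 2 * Real.sqrt t)
            * (3 / 2 * Real.Gamma (3 / 2))) := by
    rw [hC2, hexp]
    field_simp
  have hD : C2 * (∫ b in Set.Ioi (0 : ℝ), Real.sinh r * (-(3 / 2))
        * (MilsonAux.f t b * (Real.cosh b + Real.cosh r) ^ (-(5 / 2 : ℝ))))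
      = -(2 * π) * Real.exp t * Real.sinh r * gruet 4 t r := by
    rw [hintc, MilsonAux.gruet_four, ← hI5]
    linear_combination I5 * hc
  have hmain : HasDerivAt (fun ρ => gruet 2 t ρ)
      (-(2 * π) * Real.exp t * Real.sinh r * gruet 4 t r) r := by
    rw [hfun, ← hD]
    exact hI
  refine ⟨hmain, ?_⟩
  rw [hmain.deriv, Real.exp_neg]
  field_simp
end

section
/- For every integer n ≥ 2, every t > 0 and every r > 0, the Gruet kernels satisfy Milson's recursion p_{n+2}(t,r) = -(e^{-n t/2} / (2π sinh(r))) · ∂p_n/∂r (t,r); in particular r ↦ p_n(t,r) is differentiable on (0,∞) with derivative -2π e^{n t/2} sinh(r) p_{n+2}(t,r). -/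
open Real MeasureTheory

lemma cosh_add_pos (b x : ℝ) : 0 < Real.cosh b + Real.cosh x :=
  add_pos (Real.cosh_pos b) (Real.cosh_pos x)

lemma one_le_cosh_add (b x : ℝ) : 1 ≤ Real.cosh b + Real.cosh x := by
  have h1 := Real.one_le_cosh b; have h2 := Real.cosh_pos x; linarith

lemma gruet_aux_int (t : ℝ) (ht : 0 < t) :
    IntegrableOn (fun b => Real.exp ((π ^ 2 - b ^ 2) / (2 * t)) * Real.sinh b)
      (Set.Ioi (0:ℝ)) := by
  have hg : Integrable (fun b : ℝ =>
      Real.exp (π ^ 2 / (2 * t) + t / 2) * Real.exp (-(1 / (2 * t)) * (b - t) ^ 2)) := by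
    exact ((integrable_exp_neg_mul_sq (by positivity)).comp_sub_right t).const_mul _
  refine Integrable.mono' (hg.restrict) ?_ ?_
  · exact ((continuous_exp.comp (by continuity)).mul Real.continuous_sinh).aestronglyMeasurable
  · filter_upwards [ae_restrict_mem measurableSet_Ioi] with b hb
    have hb0 : (0:ℝ) < b := hb
    have h1 : Real.sinh b ≤ Real.exp b := by
      rw [Real.sinh_eq]
      nlinarith [Real.exp_pos (-b), Real.exp_pos b]
    have h2 : |Real.exp ((π ^ 2 - b ^ 2) / (2 * t)) * Real.sinh b|
        = Real.exp ((π ^ 2 - b ^ 2) / (2 * t)) * Real.sinh b := by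
      have h3 := Real.sinh_nonneg_iff.2 hb0.le
      have h4 := (Real.exp_pos ((π ^ 2 - b ^ 2) / (2 * t))).le
      exact abs_of_nonneg (mul_nonneg h4 h3)
    rw [Real.norm_eq_abs, h2]
    calc Real.exp ((π ^ 2 - b ^ 2) / (2 * t)) * Real.sinh b
        ≤ Real.exp ((π ^ 2 - b ^ 2) / (2 * t)) * Real.exp b := by
          exact mul_le_mul_of_nonneg_left h1 (Real.exp_pos _).le
      _ = Real.exp (π ^ 2 / (2 * t) + t / 2) * Real.exp (-(1 / (2 * t)) * (b - t) ^ 2) := by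
          rw [← Real.exp_add, ← Real.exp_add]
          congr 1
          field_simp
          ring

lemma gruet_cont (t s x : ℝ) (hs : 0 ≤ s) :
    Continuous (fun b => Real.exp ((π ^ 2 - b ^ 2) / (2 * t)) * Real.sinh b *
      Real.sin (π * b / t) / (Real.cosh b + Real.cosh x) ^ s) := by
  refine Continuous.div ?_ ?_ ?_
  · exact ((continuous_exp.comp (by continuity)).mul Real.continuous_sinh).mul
      (Real.continuous_sin.comp (by continuity))
  · exact (Real.continuous_cosh.add continuous_const).rpow_const (fun b => Or.inr hs)
  · exact fun b => (Real.rpow_pos_of_pos (cosh_add_pos b x) s).ne'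

lemma gruet_abs_le (t b x s : ℝ) (hb : 0 < b) (hs : 0 ≤ s) :
    ‖Real.exp ((π ^ 2 - b ^ 2) / (2 * t)) * Real.sinh b *
      Real.sin (π * b / t) / (Real.cosh b + Real.cosh x) ^ s‖
      ≤ Real.exp ((π ^ 2 - b ^ 2) / (2 * t)) * Real.sinh b := by
  have hden : 1 ≤ (Real.cosh b + Real.cosh x) ^ s :=
    Real.one_le_rpow (one_le_cosh_add b x) hs
  have hsinh : 0 ≤ Real.sinh b := Real.sinh_nonneg_iff.2 hb.le
  rw [Real.norm_eq_abs, abs_div, abs_of_nonneg (le_trans zero_le_one hden)]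
  calc |Real.exp ((π ^ 2 - b ^ 2) / (2 * t)) * Real.sinh b * Real.sin (π * b / t)| /
        (Real.cosh b + Real.cosh x) ^ s
      ≤ |Real.exp ((π ^ 2 - b ^ 2) / (2 * t)) * Real.sinh b * Real.sin (π * b / t)| :=
        div_le_self (abs_nonneg _) hden
    _ ≤ Real.exp ((π ^ 2 - b ^ 2) / (2 * t)) * Real.sinh b * 1 := by
        rw [abs_mul, abs_mul, abs_of_nonneg (Real.exp_pos _).le, abs_of_nonneg hsinh]
        exact mul_le_mul_of_nonneg_left (Real.abs_sin_le_one _) (by positivity)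
    _ = _ := mul_one _

lemma gruet_int (t : ℝ) (ht : 0 < t) (s : ℝ) (hs : 0 ≤ s) (x : ℝ) :
    IntegrableOn (fun b => Real.exp ((π ^ 2 - b ^ 2) / (2 * t)) * Real.sinh b *
      Real.sin (π * b / t) / (Real.cosh b + Real.cosh x) ^ s) (Set.Ioi (0:ℝ)) := by
  refine (gruet_aux_int t ht).mono' ((gruet_cont t s x hs).aestronglyMeasurable.restrict) ?_
  filter_upwards [ae_restrict_mem measurableSet_Ioi] with b hb
  exact gruet_abs_le t b x s hb hs

lemma gruet_ptwise_deriv (t s b : ℝ) (x : ℝ) :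
    HasDerivAt (fun x => Real.exp ((π ^ 2 - b ^ 2) / (2 * t)) * Real.sinh b *
        Real.sin (π * b / t) / (Real.cosh b + Real.cosh x) ^ s)
      (-(s * Real.sinh x) * (Real.exp ((π ^ 2 - b ^ 2) / (2 * t)) * Real.sinh b *
        Real.sin (π * b / t) / (Real.cosh b + Real.cosh x) ^ (s + 1))) x := by
  set f := Real.exp ((π ^ 2 - b ^ 2) / (2 * t)) * Real.sinh b * Real.sin (π * b / t) with hf
  have h1 : HasDerivAt (fun x => Real.cosh b + Real.cosh x) (Real.sinh x) x :=
    (Real.hasDerivAt_cosh x).const_add _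
  have h2 : HasDerivAt (fun y : ℝ => y ^ (-s)) (-s * (Real.cosh b + Real.cosh x) ^ (-s - 1))
      (Real.cosh b + Real.cosh x) :=
    Real.hasDerivAt_rpow_const (Or.inl (cosh_add_pos b x).ne')
  have h3 := (h2.comp x h1).const_mul f
  have heq : (fun x => f * ((Real.cosh b + Real.cosh x) ^ (-s)))
      = fun x => f / (Real.cosh b + Real.cosh x) ^ s := by
    funext y
    rw [Real.rpow_neg (cosh_add_pos b y).le, div_eq_mul_inv]
  have hval : f * (-s * (Real.cosh b + Real.cosh x) ^ (-s - 1) * Real.sinh x)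
      = -(s * Real.sinh x) * (f / (Real.cosh b + Real.cosh x) ^ (s + 1)) := by
    have hns : (-s - 1 : ℝ) = -(s + 1) := by ring
    rw [hns, Real.rpow_neg (cosh_add_pos b x).le, div_eq_mul_inv]
    ring
  rw [← heq, ← hval]
  exact h3

lemma gruet_integral_hasDerivAt (t : ℝ) (ht : 0 < t) (s : ℝ) (hs : 0 ≤ s) (r : ℝ) :
    HasDerivAt (fun x => ∫ b in Set.Ioi (0:ℝ),
        Real.exp ((π ^ 2 - b ^ 2) / (2 * t)) * Real.sinh b * Real.sin (π * b / t) /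
          (Real.cosh b + Real.cosh x) ^ s)
      (-(s * Real.sinh r) * ∫ b in Set.Ioi (0:ℝ),
        Real.exp ((π ^ 2 - b ^ 2) / (2 * t)) * Real.sinh b * Real.sin (π * b / t) /
          (Real.cosh b + Real.cosh r) ^ (s + 1)) r := by
  have hs1 : (0:ℝ) ≤ s + 1 := by linarith
  set F : ℝ → ℝ → ℝ := fun x b =>
    Real.exp ((π ^ 2 - b ^ 2) / (2 * t)) * Real.sinh b * Real.sin (π * b / t) /
      (Real.cosh b + Real.cosh x) ^ s with hF
  set F' : ℝ → ℝ → ℝ := fun x b =>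
    -(s * Real.sinh x) * (Real.exp ((π ^ 2 - b ^ 2) / (2 * t)) * Real.sinh b *
      Real.sin (π * b / t) / (Real.cosh b + Real.cosh x) ^ (s + 1)) with hF'
  have key := hasDerivAt_integral_of_dominated_loc_of_deriv_le
    (μ := volume.restrict (Set.Ioi (0:ℝ))) (x₀ := r) (F := F) (F' := F')
    (bound := fun b => s * Real.sinh (|r| + 1) *
      (Real.exp ((π ^ 2 - b ^ 2) / (2 * t)) * Real.sinh b)) (s := Metric.ball r 1) (Metric.ball_mem_nhds r one_pos)
    (Filter.Eventually.of_forall fun x =>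
      ((gruet_cont t s x hs).aestronglyMeasurable.restrict))
    (gruet_int t ht s hs r)
    ((((gruet_cont t (s+1) r hs1).aestronglyMeasurable).const_mul
      (-(s * Real.sinh r))).restrict)
    ?_ (((gruet_aux_int t ht).const_mul _)) ?_
  · have := key.2
    rwa [MeasureTheory.integral_const_mul] at this
  · -- bound
    filter_upwards [ae_restrict_mem measurableSet_Ioi] with b hb x hx
    have hb0 : (0:ℝ) < b := hb
    have hxr : |x| ≤ |r| + 1 := by
      have := Metric.mem_ball.1 hx
      rw [Real.dist_eq] at this
      cases abs_cases (x - r) with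
      | inl h => cases abs_cases r <;> cases abs_cases x <;> intros <;> linarith [this, h.1]
      | inr h => cases abs_cases r <;> cases abs_cases x <;> intros <;> linarith [this, h.1]
    have hsx : |Real.sinh x| ≤ Real.sinh (|r| + 1) := by
      rw [Real.abs_sinh]
      exact Real.sinh_le_sinh.2 hxr
    have h1 : ‖F' x b‖ = |(-(s * Real.sinh x))| *
        ‖Real.exp ((π ^ 2 - b ^ 2) / (2 * t)) * Real.sinh b * Real.sin (π * b / t) /
          (Real.cosh b + Real.cosh x) ^ (s + 1)‖ := by
      rw [hF', Real.norm_eq_abs, abs_mul, Real.norm_eq_abs]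
    rw [h1]
    have h2 : |(-(s * Real.sinh x))| ≤ s * Real.sinh (|r| + 1) := by
      rw [abs_neg, abs_mul, abs_of_nonneg hs]
      exact mul_le_mul_of_nonneg_left hsx hs
    have h3 := gruet_abs_le t b x (s+1) hb0 hs1
    have h4 : (0:ℝ) ≤ s * Real.sinh (|r| + 1) := by
      have : (0:ℝ) ≤ Real.sinh (|r| + 1) :=
        Real.sinh_nonneg_iff.2 (by positivity)
      positivity
    exact mul_le_mul h2 h3 (norm_nonneg _) h4
  · -- differentiability
    filter_upwards [ae_restrict_mem measurableSet_Ioi] with b _ x _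
    exact gruet_ptwise_deriv t s b x

/-- Milson's recursion for the Gruet kernels: for every `n ≥ 2`, `t > 0` and `r > 0`,
`p_{n+2}(t,r) = -(e^{-nt/2} / (2π sinh r)) ∂p_n/∂r(t,r)`, and `r ↦ p_n(t,r)` is
differentiable on `(0,∞)` with derivative `-2π e^{nt/2} sinh(r) p_{n+2}(t,r)`. -/
theorem milson_recursion (n : ℕ) (hn : 2 ≤ n) (t r : ℝ) (ht : 0 < t) (hr : 0 < r) :
    HasDerivAt (fun ρ => gruet n t ρ)
      (-(2 * π) * Real.exp ((n : ℝ) * t / 2) * Real.sinh r * gruet (n + 2) t r) r ∧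
    gruet (n + 2) t r
      = -(Real.exp (-((n : ℝ) * t) / 2) / (2 * π * Real.sinh r))
          * deriv (fun ρ => gruet n t ρ) r := by
  set s : ℝ := ((n : ℝ) + 1) / 2 with hsdef
  have hs : (0:ℝ) ≤ s := by positivity
  set C : ℝ := Real.exp (-((n : ℝ) - 1) ^ 2 * t / 8) /
      (π * (2 * π) ^ ((n : ℝ) / 2) * Real.sqrt t) * Real.Gamma (((n : ℝ) + 1) / 2) with hC
  set C' : ℝ := Real.exp (-(((n:ℝ) + 2) - 1) ^ 2 * t / 8) /
      (π * (2 * π) ^ (((n:ℝ) + 2) / 2) * Real.sqrt t) * Real.Gamma ((((n:ℝ) + 2) + 1) / 2)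
    with hC'
  set J : ℝ := ∫ b in Set.Ioi (0:ℝ),
      Real.exp ((π ^ 2 - b ^ 2) / (2 * t)) * Real.sinh b * Real.sin (π * b / t) /
        (Real.cosh b + Real.cosh r) ^ (s + 1) with hJ
  have hgr2 : gruet (n + 2) t r = C' * J := by
    rw [gruet, hC', hJ]
    have hcast : ((n + 2 : ℕ) : ℝ) = (n : ℝ) + 2 := by push_cast; ring
    rw [hcast]
    congr 2
    funext b
    congr 1
    rw [hsdef]; ring
  have hgrn : ∀ ρ, gruet n t ρ = C * ∫ b in Set.Ioi (0:ℝ),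
      Real.exp ((π ^ 2 - b ^ 2) / (2 * t)) * Real.sinh b * Real.sin (π * b / t) /
        (Real.cosh b + Real.cosh ρ) ^ s := by
    intro ρ; rw [gruet, hC, hsdef]
  have hd0 := (gruet_integral_hasDerivAt t ht s hs r).const_mul C
  have hd : HasDerivAt (fun ρ => gruet n t ρ) (C * (-(s * Real.sinh r) * J)) r := by
    refine HasDerivAt.congr_of_eventuallyEq hd0 ?_
    exact Filter.Eventually.of_forall fun ρ => (hgrn ρ)
  -- constants identity
  have hGamma : Real.Gamma ((((n:ℝ) + 2) + 1) / 2) = s * Real.Gamma (((n:ℝ) + 1) / 2) := by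
    have h1 : (((n:ℝ) + 2) + 1) / 2 = ((n:ℝ) + 1) / 2 + 1 := by ring
    rw [h1, Real.Gamma_add_one (by positivity), hsdef]
  have hpow : (2 * π) ^ (((n:ℝ) + 2) / 2) = (2 * π) ^ ((n : ℝ) / 2) * (2 * π) := by
    have h1 : (((n:ℝ) + 2) / 2) = (n : ℝ) / 2 + 1 := by ring
    rw [h1, Real.rpow_add (by positivity), Real.rpow_one]
  have hexp : Real.exp (-(((n:ℝ) + 2) - 1) ^ 2 * t / 8) * Real.exp ((n : ℝ) * t / 2)
      = Real.exp (-((n : ℝ) - 1) ^ 2 * t / 8) := by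
    rw [← Real.exp_add]; congr 1; ring
  have hsqrt : Real.sqrt t ≠ 0 := (Real.sqrt_pos.2 ht).ne'
  have hppos : (0:ℝ) < (2 * π) ^ ((n : ℝ) / 2) := Real.rpow_pos_of_pos (by positivity) _
  have hconst : C * (-s) = -(2 * π) * Real.exp ((n : ℝ) * t / 2) * C' := by
    rw [hC, hC', hGamma, hpow, ← hexp]
    field_simp
  have hderiv_eq : C * (-(s * Real.sinh r) * J)
      = -(2 * π) * Real.exp ((n : ℝ) * t / 2) * Real.sinh r * gruet (n + 2) t r := by
    rw [hgr2]
    have : C * (-(s * Real.sinh r) * J) = (C * (-s)) * (Real.sinh r * J) := by ring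
    rw [this, hconst]; ring
  have hd' : HasDerivAt (fun ρ => gruet n t ρ)
      (-(2 * π) * Real.exp ((n : ℝ) * t / 2) * Real.sinh r * gruet (n + 2) t r) r := by
    rwa [hderiv_eq] at hd
  refine ⟨hd', ?_⟩
  rw [hd'.deriv]
  have hsinh : Real.sinh r ≠ 0 := (Real.sinh_pos_iff.2 hr).ne'
  have hone : Real.exp (-((n : ℝ) * t) / 2) * Real.exp ((n : ℝ) * t / 2) = 1 := by
    rw [← Real.exp_add, show -((n:ℝ) * t) / 2 + (n:ℝ) * t / 2 = 0 by ring, Real.exp_zero]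
  have h2 : (2 * π * Real.sinh r) ≠ 0 := mul_ne_zero (by positivity) hsinh
  have : -(Real.exp (-((n : ℝ) * t) / 2) / (2 * π * Real.sinh r)) * (-(2 * π) * Real.exp ((n : ℝ) * t / 2) * Real.sinh r * gruet (n + 2) t r) = (Real.exp (-((n : ℝ) * t) / 2) * Real.exp ((n : ℝ) * t / 2)) * gruet (n + 2) t r * ((2 * π * Real.sinh r) / (2 * π * Real.sinh r)) := by ring
  rw [this, hone, div_self h2]; ring
end

section
/- Fix t > 0, y > 0, y' > 0 and x' ∈ ℝ, and for x ∈ ℝ let r(x) := arcosh(((x - x')^2 + y^2 + (y')^2)/(2·y·y')). Then for every x ≠ x', the function x ↦ p_2(t, r(x)) is differentiable at x with derivative ((x - x')/(y·y')) · (-e^{t}·2π·p_4(t, r(x))). -/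
open Real MeasureTheory

/-- The inverse hyperbolic cosine on `[1, ∞)`. -/
noncomputable def arcosh (x : ℝ) : ℝ := Real.log (x + Real.sqrt (x ^ 2 - 1))

lemma cosh_arcosh {s : ℝ} (hs : 1 ≤ s) : Real.cosh (_root_.arcosh s) = s := by
  have h1 : 0 ≤ s ^ 2 - 1 := by nlinarith
  have hpos : 0 < s + Real.sqrt (s ^ 2 - 1) := by
    have := Real.sqrt_nonneg (s ^ 2 - 1); linarith
  have hsq : Real.sqrt (s ^ 2 - 1) ^ 2 = s ^ 2 - 1 := Real.sq_sqrt h1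
  rw [_root_.arcosh, Real.cosh_eq, Real.exp_log hpos, Real.exp_neg, Real.exp_log hpos]
  field_simp
  nlinarith [hsq]

/-- The common integrand. -/
noncomputable def gkern (t b : ℝ) : ℝ :=
  Real.exp ((π ^ 2 - b ^ 2) / (2 * t)) * Real.sinh b * Real.sin (π * b / t)

lemma integrable_gauss_exp {t : ℝ} (ht : 0 < t) :
    Integrable (fun b : ℝ => Real.exp (-b ^ 2 / (2 * t) + b)) := by
  have h := (integrable_exp_neg_mul_sq (b := 1 / (2 * t)) (by positivity)).comp_sub_right t
  have h2 := h.const_mul (Real.exp (t / 2))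
  have heq : (fun b : ℝ => Real.exp (-b ^ 2 / (2 * t) + b))
      = fun b : ℝ => Real.exp (t / 2) * Real.exp (-(1 / (2 * t)) * (b - t) ^ 2) := by
    funext b; rw [← Real.exp_add]; congr 1; field_simp; ring
  rw [heq]; exact h2

lemma gkern_bound {t : ℝ} (ht : 0 < t) {b : ℝ} (hb : 0 ≤ b) :
    |gkern t b| ≤ Real.exp (π ^ 2 / (2 * t)) * Real.exp (-b ^ 2 / (2 * t) + b) := by
  have hsinh : |Real.sinh b| ≤ Real.exp b := by
    rw [abs_of_nonneg (by simpa using Real.sinh_le_sinh.2 hb), Real.sinh_eq]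
    have := Real.exp_pos (-b); have := Real.exp_pos b; linarith
  have hsin : |Real.sin (π * b / t)| ≤ 1 := Real.abs_sin_le_one _
  have h1 : |gkern t b| ≤ Real.exp ((π ^ 2 - b ^ 2) / (2 * t)) * Real.exp b * 1 := by
    rw [gkern, abs_mul, abs_mul, Real.abs_exp]
    gcongr
  calc |gkern t b| ≤ Real.exp ((π ^ 2 - b ^ 2) / (2 * t)) * Real.exp b * 1 := h1
    _ = Real.exp (π ^ 2 / (2 * t)) * Real.exp (-b ^ 2 / (2 * t) + b) := by
        rw [mul_one, ← Real.exp_add, ← Real.exp_add]; congr 1; field_simp; ring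

lemma gkern_meas (t : ℝ) : Measurable (gkern t) := by
  unfold gkern; fun_prop

/-- differentiation under the integral sign -/
lemma hasDerivAt_G {t : ℝ} (ht : 0 < t) {u0 : ℝ} (hu0 : 1 < u0) :
    HasDerivAt (fun u => ∫ b in Set.Ioi (0 : ℝ), gkern t b / (Real.cosh b + u) ^ ((3:ℝ)/2))
      (-(3/2) * ∫ b in Set.Ioi (0 : ℝ), gkern t b / (Real.cosh b + u0) ^ ((5:ℝ)/2)) u0 := by
  set μ := volume.restrict (Set.Ioi (0 : ℝ)) with hμ
  set F : ℝ → ℝ → ℝ := fun u b => gkern t b / (Real.cosh b + u) ^ ((3:ℝ)/2) with hF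
  set F' : ℝ → ℝ → ℝ := fun u b => gkern t b * (-(3/2) / (Real.cosh b + u) ^ ((5:ℝ)/2)) with hF'
  set bound : ℝ → ℝ := fun b =>
    (3/2) * (Real.exp (π ^ 2 / (2 * t)) * Real.exp (-b ^ 2 / (2 * t) + b)) with hbd
  have hεpos : (0:ℝ) < u0 - 1 := by linarith
  have hball : ∀ u ∈ Metric.ball u0 (u0 - 1), (1:ℝ) < u := by
    intro u hu
    rw [Metric.mem_ball, Real.dist_eq, abs_lt] at hu
    linarith [hu.1]
  have hdom : Integrable bound μ := by
    exact (((integrable_gauss_exp ht).const_mul _).const_mul _).restrict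
  have hmeasF : ∀ u : ℝ, AEStronglyMeasurable (F u) μ := by
    intro u
    refine Measurable.aestronglyMeasurable ?_
    exact (gkern_meas t).div ((Real.continuous_cosh.measurable.add_const u).pow_const _)
  have hmeasF' : AEStronglyMeasurable (F' u0) μ := by
    refine Measurable.aestronglyMeasurable ?_
    exact (gkern_meas t).mul
      (measurable_const.div ((Real.continuous_cosh.measurable.add_const u0).pow_const _))
  have hApos : ∀ (u b : ℝ), 1 < u → (0:ℝ) < Real.cosh b + u := fun u b hu => by
    have := Real.one_le_cosh b; linarith
  have hA1 : ∀ (u b : ℝ), 1 < u → (1:ℝ) ≤ Real.cosh b + u := fun u b hu => by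
    have := Real.one_le_cosh b; linarith
  have h_bound : ∀ᵐ b ∂μ, ∀ u ∈ Metric.ball u0 (u0 - 1), ‖F' u b‖ ≤ bound b := by
    rw [hμ, ae_restrict_iff' measurableSet_Ioi]
    filter_upwards with b hb
    intro u hu
    have hu1 := hball u hu
    have hA := hA1 u b hu1
    have h1 : (1:ℝ) ≤ (Real.cosh b + u) ^ ((5:ℝ)/2) := Real.one_le_rpow hA (by norm_num)
    have hA5 : (0:ℝ) ≤ (Real.cosh b + u) ^ ((5:ℝ)/2) := Real.rpow_nonneg (by linarith) _
    have habs : |(-(3/2:ℝ)) / (Real.cosh b + u) ^ ((5:ℝ)/2)|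
        = (3/2) / (Real.cosh b + u) ^ ((5:ℝ)/2) := by
      rw [abs_div, abs_neg, abs_of_nonneg hA5, abs_of_pos (by norm_num : (0:ℝ) < 3/2)]
    have hnorm : ‖F' u b‖ = |gkern t b| * ((3/2) / (Real.cosh b + u) ^ ((5:ℝ)/2)) := by
      rw [hF', Real.norm_eq_abs, abs_mul, habs]
    rw [hnorm, hbd]
    have hle : (3/2 : ℝ) / (Real.cosh b + u) ^ ((5:ℝ)/2) ≤ 3/2 :=
      div_le_self (by norm_num) h1
    have hstep := mul_le_mul (gkern_bound ht (le_of_lt hb)) hle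
      (by positivity) (by positivity : (0:ℝ) ≤ Real.exp (π ^ 2 / (2 * t)) * Real.exp (-b ^ 2 / (2 * t) + b))
    linarith [hstep]
  have hFint : Integrable (F u0) μ := by
    refine hdom.mono (hmeasF u0) ?_
    rw [hμ, ae_restrict_iff' measurableSet_Ioi]
    filter_upwards with b hb
    have hA := hA1 u0 b hu0
    have h1 : (1:ℝ) ≤ (Real.cosh b + u0) ^ ((3:ℝ)/2) := Real.one_le_rpow hA (by norm_num)
    have h2 : ‖F u0 b‖ ≤ |gkern t b| := by
      rw [hF, Real.norm_eq_abs, abs_div,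
        abs_of_nonneg (Real.rpow_nonneg (by linarith : (0:ℝ) ≤ Real.cosh b + u0) _)]
      exact div_le_self (abs_nonneg _) h1
    refine h2.trans ((gkern_bound ht (le_of_lt hb)).trans ?_)
    rw [Real.norm_eq_abs, hbd, abs_of_nonneg (by positivity)]
    nlinarith [mul_pos (Real.exp_pos (π ^ 2 / (2 * t))) (Real.exp_pos (-b ^ 2 / (2 * t) + b))]
  have h_diff : ∀ᵐ b ∂μ, ∀ u ∈ Metric.ball u0 (u0 - 1),
      HasDerivAt (fun u => F u b) (F' u b) u := by
    filter_upwards with b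
    intro u hu
    have hu1 := hball u hu
    have hApos' : 0 < Real.cosh b + u := hApos u b hu1
    have h1 : HasDerivAt (fun u : ℝ => Real.cosh b + u) 1 u :=
      (hasDerivAt_id u).const_add (Real.cosh b)
    have h3 : HasDerivAt (fun u : ℝ => (Real.cosh b + u) ^ ((3:ℝ)/2))
        (1 * ((3:ℝ)/2) * (Real.cosh b + u) ^ ((3:ℝ)/2 - 1)) u :=
      h1.rpow_const (Or.inl hApos'.ne')
    have hne : (Real.cosh b + u) ^ ((3:ℝ)/2) ≠ 0 := by positivity
    have h4 := (hasDerivAt_const u (gkern t b)).div h3 hne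
    refine h4.congr_deriv (Eq.symm ?_)
    have hA2 : ((Real.cosh b + u) ^ ((3:ℝ)/2)) ^ 2 = (Real.cosh b + u) ^ (3:ℝ) := by
      rw [← Real.rpow_natCast ((Real.cosh b + u) ^ ((3:ℝ)/2)) 2, ← Real.rpow_mul hApos'.le]
      norm_num
    have hA3 : (Real.cosh b + u) ^ ((3:ℝ)/2 - 1) * (Real.cosh b + u) ^ ((5:ℝ)/2)
        = (Real.cosh b + u) ^ (3:ℝ) := by
      rw [← Real.rpow_add hApos']; norm_num
    rw [hA2, zero_mul, one_mul, zero_sub, show (3:ℝ)/2 - 1 = (1:ℝ)/2 from by norm_num]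
    have hA3' : (Real.cosh b + u) ^ ((1:ℝ)/2) * (Real.cosh b + u) ^ ((5:ℝ)/2)
        = (Real.cosh b + u) ^ (3:ℝ) := by
      rw [← Real.rpow_add hApos']; norm_num
    have hne5 : (Real.cosh b + u) ^ ((5:ℝ)/2) ≠ 0 := by positivity
    have hne3 : (Real.cosh b + u) ^ (3:ℝ) ≠ 0 := by positivity
    simp only [hF']
    field_simp
    linear_combination (gkern t b) * hA3'
  have hmain := (hasDerivAt_integral_of_dominated_loc_of_deriv_le (Metric.ball_mem_nhds u0 hεpos)
    (Filter.Eventually.of_forall hmeasF) hFint hmeasF' h_bound hdom h_diff).2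
  have hrw : (∫ b, F' u0 b ∂μ)
      = -(3/2) * ∫ b in Set.Ioi (0:ℝ), gkern t b / (Real.cosh b + u0) ^ ((5:ℝ)/2) := by
    rw [hμ, ← integral_const_mul]
    congr 1
    funext b
    rw [hF']
    ring
  rw [hrw] at hmain
  exact hmain

lemma gruet_two_eq {t : ℝ} (s : ℝ) (hs : 1 ≤ s) :
    gruet 2 t (_root_.arcosh s)
      = (Real.exp (-t/8) / (π * (2*π) * Real.sqrt t) * Real.Gamma (3/2)) *
        ∫ b in Set.Ioi (0:ℝ), gkern t b / (Real.cosh b + s) ^ ((3:ℝ)/2) := by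
  rw [gruet, _root_.cosh_arcosh hs]
  norm_num [gkern]

lemma gruet_four_eq {t : ℝ} (s : ℝ) (hs : 1 ≤ s) :
    gruet 4 t (_root_.arcosh s)
      = (Real.exp (-(9*t)/8) / (π * (2*π) ^ (2:ℝ) * Real.sqrt t) * Real.Gamma (5/2)) *
        ∫ b in Set.Ioi (0:ℝ), gkern t b / (Real.cosh b + s) ^ ((5:ℝ)/2) := by
  rw [gruet, _root_.cosh_arcosh hs]
  norm_num [gkern]


/-- For fixed `t > 0`, `y, y' > 0` and `x'`, the map `x ↦ p₂(t, r(x))`, where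
`r(x) = arcosh(((x-x')² + y² + y'²)/(2yy'))`, is differentiable at every `x ≠ x'`
with derivative `((x-x')/(yy')) · (-eᵗ 2π p₄(t, r(x)))`. -/
theorem hasDerivAt_gruet_two_dist (t y y' x' : ℝ) (ht : 0 < t) (hy : 0 < y) (hy' : 0 < y')
    (x : ℝ) (hx : x ≠ x') :
    HasDerivAt (fun ξ => gruet 2 t (_root_.arcosh (((ξ - x') ^ 2 + y ^ 2 + y' ^ 2) / (2 * y * y'))))
      (((x - x') / (y * y')) *
        (-(Real.exp t) * (2 * π) *
          gruet 4 t (_root_.arcosh (((x - x') ^ 2 + y ^ 2 + y' ^ 2) / (2 * y * y'))))) x := by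
  have hyy' : 0 < 2 * y * y' := by positivity
  have hU1 : ∀ ξ : ℝ, (1:ℝ) ≤ ((ξ - x') ^ 2 + y ^ 2 + y' ^ 2) / (2 * y * y') := by
    intro ξ
    rw [le_div_iff₀ hyy']
    nlinarith [sq_nonneg (ξ - x'), sq_nonneg (y - y')]
  have hu0 : (1:ℝ) < ((x - x') ^ 2 + y ^ 2 + y' ^ 2) / (2 * y * y') := by
    rw [lt_div_iff₀ hyy']
    have h2 : 0 < (x - x') ^ 2 := by
      have : x - x' ≠ 0 := sub_ne_zero.mpr hx
      positivity
    nlinarith [sq_nonneg (y - y')]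
  have hG := hasDerivAt_G ht hu0
  have hUd : HasDerivAt (fun ξ : ℝ => ((ξ - x') ^ 2 + y ^ 2 + y' ^ 2) / (2 * y * y'))
      ((x - x') / (y * y')) x := by
    have h1 : HasDerivAt (fun ξ : ℝ => (ξ - x') ^ 2 + y ^ 2 + y' ^ 2) (2 * (x - x')) x := by
      have h0 := ((hasDerivAt_id x).sub_const x').pow 2
      have h0' := (h0.add_const (y ^ 2)).add_const (y' ^ 2)
      simpa using h0'
    have h2 := h1.div_const (2 * y * y')
    refine h2.congr_deriv (Eq.symm ?_)
    field_simp
  have hcomp := (hG.comp x hUd).const_mul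
    (Real.exp (-t/8) / (π * (2*π) * Real.sqrt t) * Real.Gamma (3/2))
  have hmain := hcomp.congr_of_eventuallyEq
    (Filter.Eventually.of_forall fun ξ => (gruet_two_eq _ (hU1 ξ)))
  refine hmain.congr_deriv (Eq.symm ?_)
  rw [gruet_four_eq _ (hU1 x)]
  rw [show Real.Gamma (5/2) = 3/2 * Real.Gamma (3/2) by
    rw [show (5:ℝ)/2 = 3/2 + 1 by norm_num, Real.Gamma_add_one (by norm_num : (3/2:ℝ) ≠ 0)]]
  rw [show Real.exp (-(9*t)/8) = Real.exp (-t/8) * (Real.exp t)⁻¹ by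
    rw [← Real.exp_neg, ← Real.exp_add]; congr 1; ring]
  rw [show ((2*π) : ℝ) ^ (2:ℝ) = (2*π) * (2*π) by
    rw [show ((2:ℝ)) = ((2:ℕ):ℝ) by norm_num, Real.rpow_natCast]; ring]
  have hS : Real.sqrt t ≠ 0 := (Real.sqrt_pos.mpr ht).ne'
  field_simp
end
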